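/- Let A be a 5-by-5 reciprocal matrix. Then for all θ, λ ∈ ℝ, writing ρ = cos²θ: det(Re(e^{iθ}A) − λI₅) = −λ·[λ⁴ − (ξ₁ + ξ₂ + ξ₃ + ξ₄ + 4ρ)λ² + (ξ₁ + ρ)(ξ₃ + ρ) + (ξ₁ + ρ)(ξ₄ + ρ) + (ξ₂ + ρ)(ξ₄ + ρ)]. -/

import Mathlib

open Matrix Polynomial

/-- A tridiagonal complex matrix with zero main diagonal whose symmetric
off-diagonal entries have pairwise products equal to one. -/
def IsReciprocal {n : ℕ} (A : Matrix (Fin n) (Fin n) ℂ) : Prop :=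
  (∀ i j : Fin n, ((i : ℤ) - (j : ℤ)) ^ 2 ≠ 1 → A i j = 0) ∧
  ∀ i j : Fin n, (j : ℕ) = (i : ℕ) + 1 → A i j * A j i = 1

/-- The Hermitian matrix `Re (e^{iθ} A) = (e^{iθ}A + (e^{iθ}A)*)/2`. -/
noncomputable def RePart {n : ℕ} (θ : ℝ) (A : Matrix (Fin n) (Fin n) ℂ) :
    Matrix (Fin n) (Fin n) ℂ :=
  (2 : ℂ)⁻¹ • (Complex.exp (θ * Complex.I) • A + (Complex.exp (θ * Complex.I) • A)ᴴ)

lemma det5' (l b0 c0 b1 c1 b2 c2 b3 c3 : ℂ) :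
  (!![-l, b0, 0, 0, 0;
      c0, -l, b1, 0, 0;
      0, c1, -l, b2, 0;
      0, 0, c2, -l, b3;
      0, 0, 0, c3, -l] : Matrix (Fin 5) (Fin 5) ℂ).det
  = -l * (l^4 - (b0*c0 + b1*c1 + b2*c2 + b3*c3)*l^2
     + (b0*c0)*(b2*c2) + (b0*c0)*(b3*c3) + (b1*c1)*(b3*c3)) := by
  simp [Matrix.det_succ_row_zero, Fin.sum_univ_succ, Fin.succAbove, Fin.succ_ne_zero]
  ring

lemma key5 (θ : ℝ) (a c : ℂ) (h : a * c = 1) :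
    (2⁻¹ * (Complex.exp (θ * Complex.I) * a + star (Complex.exp (θ * Complex.I)) * star c)) *
      (2⁻¹ * (Complex.exp (θ * Complex.I) * c + star (Complex.exp (θ * Complex.I)) * star a))
      = (((‖a‖ - ‖c‖)^2/4 + Real.cos θ^2 : ℝ) : ℂ) := by
  set e := Complex.exp (θ * Complex.I) with hedef
  have hac : ‖a‖ * ‖c‖ = 1 := by
    rw [← norm_mul, h, norm_one]
  have ha : a * star a = (‖a‖^2 : ℝ) := by
    rw [Complex.star_def, Complex.mul_conj, Complex.sq_norm]
  have hc : star c * c = (‖c‖^2 : ℝ) := by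
    rw [Complex.star_def, mul_comm, Complex.mul_conj, Complex.sq_norm]
  have hsac : star a * star c = 1 := by
    rw [← star_mul', h, star_one]
  have he1 : e * star e = 1 := by
    rw [Complex.star_def, Complex.mul_conj]
    norm_cast
    rw [Complex.normSq_eq_norm_sq, hedef, Complex.norm_exp_ofReal_mul_I]
    norm_num
  have hre : e + star e = 2 * (Real.cos θ : ℂ) := by
    rw [Complex.star_def, Complex.add_conj, hedef, Complex.exp_ofReal_mul_I_re]
    push_cast; ring
  have he2 : e^2 + (star e)^2 = 4 * (Real.cos θ : ℂ)^2 - 2 := by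
    have : e^2 + (star e)^2 = (e + star e)^2 - 2*(e * star e) := by ring
    rw [this, hre, he1]; ring
  have expand : (2⁻¹ * (e * a + star e * star c)) * (2⁻¹ * (e * c + star e * star a))
      = 4⁻¹ * ((e * star e) * (a * star a) + (a * c) * e^2
          + (star a * star c) * (star e)^2 + (e * star e) * (star c * c)) := by
    ring
  rw [expand, he1, h, hsac, ha, hc]
  have hxy : (‖a‖ : ℂ) * (‖c‖ : ℂ) = 1 := by exact_mod_cast hac
  push_cast at he2 ⊢
  linear_combination (4:ℂ)⁻¹ * he2 + 2⁻¹ * hxy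

set_option maxHeartbeats 1000000 in
/-- Kippenhahn polynomial of a 5-by-5 reciprocal matrix. -/
theorem kippenhahn_poly_five (A : Matrix (Fin 5) (Fin 5) ℂ) (hA : IsReciprocal A)
    (ξ₁ ξ₂ ξ₃ ξ₄ : ℝ)
    (h1 : ξ₁ = (‖A 0 1‖ - ‖A 1 0‖) ^ 2 / 4)
    (h2 : ξ₂ = (‖A 1 2‖ - ‖A 2 1‖) ^ 2 / 4)
    (h3 : ξ₃ = (‖A 2 3‖ - ‖A 3 2‖) ^ 2 / 4)
    (h4 : ξ₄ = (‖A 3 4‖ - ‖A 4 3‖) ^ 2 / 4) :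
    ∀ θ lam : ℝ,
      (RePart θ A - (lam : ℂ) • 1).det =
        ((-lam * (lam ^ 4 - (ξ₁ + ξ₂ + ξ₃ + ξ₄ + 4 * Real.cos θ ^ 2) * lam ^ 2
            + (ξ₁ + Real.cos θ ^ 2) * (ξ₃ + Real.cos θ ^ 2)
            + (ξ₁ + Real.cos θ ^ 2) * (ξ₄ + Real.cos θ ^ 2)
            + (ξ₂ + Real.cos θ ^ 2) * (ξ₄ + Real.cos θ ^ 2)) : ℝ) : ℂ) := by
  obtain ⟨hz, hp⟩ := hA
  intro θ lam
  set e := Complex.exp (θ * Complex.I) with hedef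
  have hM : RePart θ A - (lam : ℂ) • 1 =
      !![-(lam:ℂ), 2⁻¹ * (e * A 0 1 + star e * star (A 1 0)), 0, 0, 0;
         2⁻¹ * (e * A 1 0 + star e * star (A 0 1)), -(lam:ℂ), 2⁻¹ * (e * A 1 2 + star e * star (A 2 1)), 0, 0;
         0, 2⁻¹ * (e * A 2 1 + star e * star (A 1 2)), -(lam:ℂ), 2⁻¹ * (e * A 2 3 + star e * star (A 3 2)), 0;
         0, 0, 2⁻¹ * (e * A 3 2 + star e * star (A 2 3)), -(lam:ℂ), 2⁻¹ * (e * A 3 4 + star e * star (A 4 3));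
         0, 0, 0, 2⁻¹ * (e * A 4 3 + star e * star (A 3 4)), -(lam:ℂ)] := by
    ext i j
    fin_cases i <;> fin_cases j <;>
      simp [RePart, Matrix.one_apply, Matrix.conjTranspose_apply, star_mul', ← hedef,
        hz 0 0 (by decide), hz 1 1 (by decide), hz 2 2 (by decide), hz 3 3 (by decide),
        hz 4 4 (by decide), hz 0 2 (by decide), hz 2 0 (by decide), hz 0 3 (by decide),
        hz 3 0 (by decide), hz 0 4 (by decide), hz 4 0 (by decide), hz 1 3 (by decide),
        hz 3 1 (by decide), hz 1 4 (by decide), hz 4 1 (by decide), hz 2 4 (by decide),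
        hz 4 2 (by decide), mul_add, Matrix.vecHead, Matrix.vecTail]
  rw [hM, det5',
    key5 θ (A 0 1) (A 1 0) (hp 0 1 (by decide)),
    key5 θ (A 1 2) (A 2 1) (hp 1 2 (by decide)),
    key5 θ (A 2 3) (A 3 2) (hp 2 3 (by decide)),
    key5 θ (A 3 4) (A 4 3) (hp 3 4 (by decide)),
    ← h1, ← h2, ← h3, ← h4]
  push_cast
  ring
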